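/- Let (M, B, π, F) be a smooth fiber bundle with total space M, base B, fiber F and smooth projection π : M → B, where M and B are smooth finite-dimensional real manifolds (Hausdorff and second countable). Let H : M → ℝ^K and g : B → ℝ^k be smooth maps, write M_H = {x ∈ M : H(x) = 0} and B_g = {y ∈ B : g(y) = 0}, assume π(M_H) = B_g and assume the differential dg_y : T_yB → ℝ^k is surjective at every y ∈ B_g. Then for a smooth function f : B → ℝ, the pullback f ∘ π vanishes identically on M_H if and only if there exists a smooth map λ : B → ℝ^k such that f(y) = Σ_{s=1}^{k} λ^s(y) g^s(y) for all y ∈ B. -/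

import Mathlib

open scoped Manifold
open Function

open MeasureTheory Set
open scoped ContDiff

private theorem contDiff_parametric_integral_aux (n : ℕ) :
    ∀ {X : Type} [NormedAddCommGroup X] [NormedSpace ℝ X] [FiniteDimensional ℝ X]
    {F : Type} [NormedAddCommGroup F] [NormedSpace ℝ F] [FiniteDimensional ℝ F]
    (G : X → ℝ → F), ContDiff ℝ ∞ (uncurry G) →
    ContDiff ℝ (n : WithTop ℕ∞) (fun x => ∫ t in (0:ℝ)..1, G x t) := by
  induction n with
  | zero =>
    intro X _ _ _ F _ _ _ G hG
    exact contDiff_zero.2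
      (intervalIntegral.continuous_parametric_intervalIntegral_of_continuous' hG.continuous 0 1)
  | succ n ih =>
    intro X _ _ _ F _ _ _ G hG
    set G' : X → ℝ → (X →L[ℝ] F) := fun x t =>
      (fderiv ℝ (uncurry G) (x, t)).comp (ContinuousLinearMap.inl ℝ X ℝ) with hG'def
    have hGdiff : Differentiable ℝ (uncurry G) := hG.differentiable (by simp)
    have huncurry : uncurry G' = fun p : X × ℝ =>
        (fderiv ℝ (uncurry G) p).comp (ContinuousLinearMap.inl ℝ X ℝ) := by
      funext p; simp [hG'def, uncurry]
    have hG'c : ContDiff ℝ ∞ (uncurry G') := by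
      rw [huncurry]
      exact (hG.fderiv_right (by simp)).clm_comp contDiff_const
    have hderiv : ∀ (x : X) (t : ℝ), HasFDerivAt (fun y => G y t) (G' x t) x := by
      intro x t
      have h1 : HasFDerivAt (fun y : X => (y, t)) (ContinuousLinearMap.inl ℝ X ℝ) x :=
        (hasFDerivAt_id x).prodMk (hasFDerivAt_const t x)
      exact ((hGdiff (x, t)).hasFDerivAt).comp x h1
    have key : ∀ x₀ : X, HasFDerivAt (fun x => ∫ t in (0:ℝ)..1, G x t)
        (∫ t in (0:ℝ)..1, G' x₀ t) x₀ := by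
      intro x₀
      have hcomp : IsCompact (Metric.closedBall x₀ 1 ×ˢ Icc (0:ℝ) 1) :=
        (isCompact_closedBall x₀ 1).prod isCompact_Icc
      obtain ⟨C, hC⟩ := hcomp.exists_bound_of_continuousOn hG'c.continuous.continuousOn
      have hsub : Set.uIoc (0:ℝ) 1 ⊆ Icc (0:ℝ) 1 := by
        rw [uIoc_of_le zero_le_one]; exact Ioc_subset_Icc_self
      apply intervalIntegral.hasFDerivAt_integral_of_dominated_of_fderiv_le
        (F := G) (F' := G') (bound := fun _ => C) (Metric.ball_mem_nhds x₀ zero_lt_one)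
      · filter_upwards with x
        exact ((hG.continuous.comp (Continuous.prodMk_right x)).aestronglyMeasurable)
      · exact (hG.continuous.comp (Continuous.prodMk_right x₀)).intervalIntegrable _ _
      · exact (hG'c.continuous.comp (Continuous.prodMk_right x₀)).aestronglyMeasurable
      · filter_upwards with t ht x hx
        exact hC ⟨x, t⟩ ⟨Metric.ball_subset_closedBall hx, hsub ht⟩
      · exact intervalIntegrable_const
      · filter_upwards with t ht x _
        exact hderiv x t
    have hcast : ((n + 1 : ℕ) : WithTop ℕ∞) = (n : WithTop ℕ∞) + 1 := by push_cast; ring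
    rw [hcast, contDiff_succ_iff_fderiv]
    refine ⟨fun x => (key x).differentiableAt, fun h => absurd h (by simp), ?_⟩
    have heq : (fderiv ℝ fun x => ∫ t in (0:ℝ)..1, G x t) =
        fun x => ∫ t in (0:ℝ)..1, G' x t := funext fun x => (key x).fderiv
    rw [heq]
    exact ih G' hG'c

theorem contDiff_parametric_integral
    {X : Type} [NormedAddCommGroup X] [NormedSpace ℝ X] [FiniteDimensional ℝ X]
    {F : Type} [NormedAddCommGroup F] [NormedSpace ℝ F] [FiniteDimensional ℝ F]
    (G : X → ℝ → F) (hG : ContDiff ℝ ∞ (uncurry G)) :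
    ContDiff ℝ ∞ (fun x => ∫ t in (0:ℝ)..1, G x t) :=
  contDiff_infty.2 fun n => contDiff_parametric_integral_aux n G hG

theorem hadamard_step {X : Type} [NormedAddCommGroup X] [NormedSpace ℝ X]
    [FiniteDimensional ℝ X] {k : ℕ}
    (h : X × EuclideanSpace ℝ (Fin k) → ℝ) (hh : ContDiff ℝ ∞ h)
    (h0 : ∀ u : X, h (u, 0) = 0) :
    ∃ Kf : X × EuclideanSpace ℝ (Fin k) → (EuclideanSpace ℝ (Fin k) →L[ℝ] ℝ),
      ContDiff ℝ ∞ Kf ∧ ∀ p, h p = Kf p p.2 := by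
  set G : (X × (EuclideanSpace ℝ (Fin k))) → ℝ → ((EuclideanSpace ℝ (Fin k)) →L[ℝ] ℝ) := fun p t =>
    (fderiv ℝ h (p.1, t • p.2)).comp (ContinuousLinearMap.inr ℝ X (EuclideanSpace ℝ (Fin k))) with hGdef
  have hhd : Differentiable ℝ h := hh.differentiable (by simp)
  have hGc : ContDiff ℝ ∞ (uncurry G) := by
    have h1 : ContDiff ℝ ∞ (fun q : (X × (EuclideanSpace ℝ (Fin k))) × ℝ => (q.1.1, q.2 • q.1.2)) := by
      apply ContDiff.prodMk
      · exact contDiff_fst.comp contDiff_fst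
      · exact contDiff_snd.smul (contDiff_snd.comp contDiff_fst)
    have h2 : uncurry G = fun q : (X × (EuclideanSpace ℝ (Fin k))) × ℝ =>
        (fderiv ℝ h (q.1.1, q.2 • q.1.2)).comp (ContinuousLinearMap.inr ℝ X (EuclideanSpace ℝ (Fin k))) := by
      funext q; simp [hGdef, uncurry]
    rw [h2]
    exact ((hh.fderiv_right (by simp)).comp h1).clm_comp contDiff_const
  refine ⟨fun p => ∫ t in (0:ℝ)..1, G p t, contDiff_parametric_integral G hGc, ?_⟩
  intro p
  have hder : ∀ t : ℝ, HasDerivAt (fun s => h (p.1, s • p.2)) (G p t p.2) t := by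
    intro t
    have h1 : HasDerivAt (fun s : ℝ => ((p.1, s • p.2) : X × (EuclideanSpace ℝ (Fin k)))) ((0 : X), p.2) t := by
      apply HasDerivAt.prodMk
      · exact hasDerivAt_const t p.1
      · simpa using (hasDerivAt_id t).smul_const p.2
    have h2 : HasFDerivAt h (fderiv ℝ h (p.1, t • p.2)) (p.1, t • p.2) :=
      (hhd _).hasFDerivAt
    have := h2.comp_hasDerivAt t h1
    simpa [hGdef, Function.comp_def] using this
  have hcont : Continuous fun t => G p t p.2 := by
    have : Continuous fun t => G p t :=
      hGc.continuous.comp (Continuous.prodMk_right p)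
    exact (ContinuousLinearMap.apply ℝ ℝ p.2).continuous.comp this
  have hFTC := intervalIntegral.integral_eq_sub_of_hasDerivAt (fun t _ => hder t)
    (hcont.intervalIntegrable 0 1)
  have happly : (∫ t in (0:ℝ)..1, G p t) p.2 = ∫ t in (0:ℝ)..1, G p t p.2 := by
    rw [intervalIntegral.integral_of_le zero_le_one, intervalIntegral.integral_of_le zero_le_one]
    exact ContinuousLinearMap.integral_apply
      ((hGc.continuous.comp (Continuous.prodMk_right p)).integrableOn_Ioc) p.2
  rw [happly, hFTC]
  simp [h0]

noncomputable def euclTranspose (k : ℕ) :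
    (EuclideanSpace ℝ (Fin k) →L[ℝ] ℝ) →L[ℝ] EuclideanSpace ℝ (Fin k) :=
  LinearMap.toContinuousLinearMap
  { toFun := fun L => (WithLp.toLp 2 (fun s => L (EuclideanSpace.single s 1)) : EuclideanSpace ℝ (Fin k))
    map_add' := fun L L' => rfl
    map_smul' := fun c L => rfl }

theorem euclTranspose_apply {k : ℕ} (L : EuclideanSpace ℝ (Fin k) →L[ℝ] ℝ) (s : Fin k) :
    euclTranspose k L s = L (EuclideanSpace.single s 1) := rfl

theorem clm_eq_sum_coords {k : ℕ} (L : EuclideanSpace ℝ (Fin k) →L[ℝ] ℝ)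
    (w : EuclideanSpace ℝ (Fin k)) :
    L w = ∑ s : Fin k, L (EuclideanSpace.single s 1) * w s := by
  have hw : ∑ s : Fin k, w s • EuclideanSpace.single s (1:ℝ) = w := by
    have := (EuclideanSpace.basisFun (Fin k) ℝ).sum_repr w
    simpa [EuclideanSpace.basisFun_apply, EuclideanSpace.basisFun_repr] using this
  conv_lhs => rw [← hw]
  rw [map_sum]
  refine Finset.sum_congr rfl fun s _ => ?_
  rw [_root_.map_smul]
  simp [mul_comm]

theorem local_hadamard {E : Type} [NormedAddCommGroup E] [NormedSpace ℝ E]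
    [FiniteDimensional ℝ E] {k : ℕ} {U : Set E} (hU : IsOpen U) {x0 : E} (hx0U : x0 ∈ U)
    {G1 : E → EuclideanSpace ℝ (Fin k)} {F1 : E → ℝ}
    (hG : ContDiffOn ℝ ∞ G1 U) (hF : ContDiffOn ℝ ∞ F1 U)
    (hx0 : G1 x0 = 0) (hsurj : Function.Surjective (fderiv ℝ G1 x0))
    (hz : ∀ x ∈ U, G1 x = 0 → F1 x = 0) :
    ∃ V : Set E, IsOpen V ∧ x0 ∈ V ∧ V ⊆ U ∧ ∃ lam : E → EuclideanSpace ℝ (Fin k),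
      ContDiffOn ℝ ∞ lam V ∧ ∀ x ∈ V, F1 x = ∑ s : Fin k, lam x s * G1 x s := by
  classical
  have hone : (1 : WithTop ℕ∞) ≤ ∞ := by exact_mod_cast le_top
  set D : E →L[ℝ] EuclideanSpace ℝ (Fin k) := fderiv ℝ G1 x0 with hDdef
  obtain ⟨R₀, hR₀⟩ := (D : E →ₗ[ℝ] EuclideanSpace ℝ (Fin k)).exists_rightInverse_of_surjective
    (LinearMap.range_eq_top.2 hsurj)
  set R : EuclideanSpace ℝ (Fin k) →L[ℝ] E := LinearMap.toContinuousLinearMap R₀ with hRdef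
  have hRD : ∀ w, D (R w) = w := fun w => by
    exact LinearMap.ext_iff.1 hR₀ w
  set N : Submodule ℝ E := LinearMap.ker (D : E →ₗ[ℝ] EuclideanSpace ℝ (Fin k)) with hNdef
  have hQmem : ∀ x : E, (ContinuousLinearMap.id ℝ E - R.comp D) x ∈ N := by
    intro x
    simp [hNdef, LinearMap.mem_ker, map_sub, hRD]
  set P : E →L[ℝ] N := (ContinuousLinearMap.id ℝ E - R.comp D).codRestrict N hQmem with hPdef
  have hPapply : ∀ x : E, (P x : E) = x - R (D x) := fun x => rfl
  set T : E →L[ℝ] N × EuclideanSpace ℝ (Fin k) := P.prod D with hTdef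
  set S : N × EuclideanSpace ℝ (Fin k) →L[ℝ] E := N.subtypeL.coprod R with hSdef
  have hST : Function.LeftInverse S T := by
    intro x
    show (P x : E) + R (D x) = x
    rw [hPapply]; abel
  have hTS : Function.RightInverse S T := by
    rintro ⟨⟨u, hu⟩, w⟩
    have hDu : D u = 0 := hu
    have hSval : S (⟨u, hu⟩, w) = u + R w := rfl
    apply Prod.ext
    · apply Subtype.ext
      show (P (S (⟨u, hu⟩, w)) : E) = u
      rw [hSval, hPapply, map_add, hDu, zero_add, hRD, add_sub_cancel_right]
    · show D (S (⟨u, hu⟩, w)) = w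
      rw [hSval, map_add, hDu, zero_add, hRD]
  set T' : E ≃L[ℝ] N × EuclideanSpace ℝ (Fin k) :=
    ContinuousLinearEquiv.equivOfInverse T S hST hTS with hT'def
  -- the straightening map
  set Φ : E → N × EuclideanSpace ℝ (Fin k) := fun x => (P x, G1 x) with hΦdef
  have hΦsm : ContDiffOn ℝ ∞ Φ U := (P.contDiff.contDiffOn).prodMk hG
  set Θ : E → E := fun x => T'.symm (Φ x) with hΘdef
  have hΘsm : ContDiffOn ℝ ∞ Θ U :=
    (T'.symm.contDiff.comp_contDiffOn hΦsm)
  have hGat : ContDiffAt ℝ ∞ G1 x0 := hG.contDiffAt (hU.mem_nhds hx0U)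
  have hΦd : HasFDerivAt Φ (T : E →L[ℝ] N × EuclideanSpace ℝ (Fin k)) x0 :=
    P.hasFDerivAt.prodMk (hGat.differentiableAt (by simp)).hasFDerivAt
  have hΘd : HasFDerivAt Θ (ContinuousLinearMap.id ℝ E) x0 := by
    have h1 := T'.symm.hasFDerivAt.comp x0 hΦd
    have h2 : (T'.symm : N × EuclideanSpace ℝ (Fin k) →L[ℝ] E).comp T =
        ContinuousLinearMap.id ℝ E := ContinuousLinearMap.ext fun x => hST x
    rwa [h2] at h1
  have hΘat : ContDiffAt ℝ ∞ Θ x0 := hΘsm.contDiffAt (hU.mem_nhds hx0U)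
  have hΘstrict : HasStrictFDerivAt Θ
      ((ContinuousLinearEquiv.refl ℝ E : E ≃L[ℝ] E) : E →L[ℝ] E) x0 :=
    hΘat.hasStrictFDerivAt' (by simpa using hΘd) (by simp)
  set ph : OpenPartialHomeomorph E E := hΘstrict.toOpenPartialHomeomorph Θ with hphdef
  have hphcoe : ⇑ph = Θ := hΘstrict.toOpenPartialHomeomorph_coe
  have hx0src : x0 ∈ ph.source := hΘstrict.mem_toOpenPartialHomeomorph_source
  -- the set where the derivative of Θ is invertible
  set U' : Set E := U ∩ fderiv ℝ Θ ⁻¹' {L : E →L[ℝ] E | IsUnit L} with hU'def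
  have hU'open : IsOpen U' :=
    (hΘsm.continuousOn_fderiv_of_isOpen hU hone).isOpen_inter_preimage hU Units.isOpen
  have hx0U' : x0 ∈ U' := by
    refine ⟨hx0U, ?_⟩
    have : fderiv ℝ Θ x0 = ContinuousLinearMap.id ℝ E := hΘd.fderiv
    simp only [Set.mem_preimage, Set.mem_setOf_eq, this]
    exact isUnit_one
  -- the open set on which the inverse is smooth
  set Ω : Set E := ph.target ∩ ph.symm ⁻¹' U' with hΩdef
  have hΩopen : IsOpen Ω :=
    ph.symm.continuousOn.isOpen_inter_preimage ph.symm.open_source hU'open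
  have hz0Ω : Θ x0 ∈ Ω := by
    constructor
    · rw [← hphcoe]; exact ph.map_source hx0src
    · have : ph.symm (Θ x0) = x0 := by
        rw [← hphcoe]; exact ph.left_inv hx0src
      rw [Set.mem_preimage, this]; exact hx0U'
  have hsymm_sm : ContDiffOn ℝ ∞ ph.symm Ω := by
    intro q hq
    have hqt : q ∈ ph.target := hq.1
    have hxq : ph.symm q ∈ U' := hq.2
    have hIs : IsUnit (fderiv ℝ Θ (ph.symm q)) := hxq.2
    set e : E ≃L[ℝ] E := ContinuousLinearEquiv.unitsEquiv ℝ E hIs.unit with hedef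
    have hd : HasFDerivAt (⇑ph) (e : E →L[ℝ] E) (ph.symm q) := by
      rw [hphcoe]
      have : (e : E →L[ℝ] E) = fderiv ℝ Θ (ph.symm q) := rfl
      rw [this]
      exact ((hΘsm.contDiffAt (hU.mem_nhds hxq.1)).differentiableAt (by simp)).hasFDerivAt
    have hcd : ContDiffAt ℝ ∞ (⇑ph) (ph.symm q) := by
      rw [hphcoe]; exact hΘsm.contDiffAt (hU.mem_nhds hxq.1)
    exact (ph.contDiffAt_symm hqt hd hcd).contDiffWithinAt
  -- transfer to the product space
  set Ψ : N × EuclideanSpace ℝ (Fin k) → E := fun p => ph.symm (T'.symm p) with hΨdef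
  set z0 : N × EuclideanSpace ℝ (Fin k) := Φ x0 with hz0def
  have hT'symmz0 : T'.symm z0 = Θ x0 := rfl
  set Ω' : Set (N × EuclideanSpace ℝ (Fin k)) := T'.symm ⁻¹' Ω with hΩ'def
  have hΩ'open : IsOpen Ω' := hΩopen.preimage T'.symm.continuous
  have hz0Ω' : z0 ∈ Ω' := by rw [hΩ'def, Set.mem_preimage, hT'symmz0]; exact hz0Ω
  have hΨsm : ContDiffOn ℝ ∞ Ψ Ω' :=
    hsymm_sm.comp (T'.symm.contDiff.contDiffOn) (fun p hp => hp)
  have hΨmaps : ∀ p ∈ Ω', Ψ p ∈ U' := fun p hp => hp.2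
  -- right inverse property on Ω'
  have hright : ∀ p ∈ Ω', Φ (Ψ p) = p := by
    intro p hp
    have h1 : Θ (Ψ p) = T'.symm p := by
      rw [← hphcoe]; exact ph.right_inv hp.1
    have h2 : T' (Θ (Ψ p)) = Φ (Ψ p) := by
      rw [hΘdef]; exact T'.apply_symm_apply _
    rw [← h2, h1, T'.apply_symm_apply]
  -- f̃ = F1 ∘ Ψ is smooth on Ω' and vanishes on the zero section
  have hftilde_sm : ContDiffOn ℝ ∞ (F1 ∘ Ψ) Ω' :=
    hF.comp hΨsm (fun p hp => (hΨmaps p hp).1)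
  have hvanloc : ∀ p ∈ Ω', p.2 = 0 → F1 (Ψ p) = 0 := by
    intro p hp hp2
    apply hz _ (hΨmaps p hp).1
    have : G1 (Ψ p) = (Φ (Ψ p)).2 := rfl
    rw [this, hright p hp, hp2]
  -- cutoff
  obtain ⟨r, hr, hball⟩ := Metric.nhds_basis_closedBall.mem_iff.1 (hΩ'open.mem_nhds hz0Ω')
  set χ : ContDiffBump z0 := ⟨r / 2, r, by positivity, by linarith⟩ with hχdef
  set h : N × EuclideanSpace ℝ (Fin k) → ℝ := fun p => χ p * F1 (Ψ p) with hhdef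
  have hhsm : ContDiff ℝ ∞ h := by
    rw [contDiff_iff_contDiffAt]
    intro p
    by_cases hp : p ∈ Ω'
    · exact χ.contDiff.contDiffAt.mul ((hftilde_sm p hp).contDiffAt (hΩ'open.mem_nhds hp))
    · have hns : p ∉ tsupport (χ : N × EuclideanSpace ℝ (Fin k) → ℝ) := by
        rw [χ.tsupport_eq]
        exact fun hmem => hp (hball hmem)
      have hev : ∀ᶠ q in nhds p, h q = 0 := by
        filter_upwards [(isClosed_tsupport (χ : N × EuclideanSpace ℝ (Fin k) → ℝ)).isOpen_compl.mem_nhds hns] with q hq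
        simp [hhdef, image_eq_zero_of_notMem_tsupport hq]
      exact (contDiffAt_const (c := (0:ℝ))).congr_of_eventuallyEq hev
  have hh0 : ∀ u : N, h (u, 0) = 0 := by
    intro u
    by_cases hmem : (u, (0 : EuclideanSpace ℝ (Fin k))) ∈ Metric.closedBall z0 r
    · have : F1 (Ψ (u, 0)) = 0 := hvanloc _ (hball hmem) rfl
      simp [hhdef, this]
    · have : χ (u, 0) = 0 := by
        apply image_eq_zero_of_notMem_tsupport
        rw [χ.tsupport_eq]; exact hmem
      simp [hhdef, this]
  obtain ⟨Kf, hKsm, hKeq⟩ := hadamard_step h hhsm hh0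
  -- define lam and V
  set lam : E → EuclideanSpace ℝ (Fin k) := fun x => euclTranspose k (Kf (Φ x)) with hlamdef
  set V : Set E := (U ∩ ph.source) ∩ Φ ⁻¹' Metric.ball z0 (r / 2) with hVdef
  have hVopen : IsOpen V := by
    apply (hΦsm.continuousOn.mono Set.inter_subset_left).isOpen_inter_preimage
      (hU.inter ph.open_source) Metric.isOpen_ball
  have hx0V : x0 ∈ V := by
    refine ⟨⟨hx0U, hx0src⟩, ?_⟩
    simp [Set.mem_preimage, ← hz0def, Metric.mem_ball, hr]
  have hVU : V ⊆ U := fun x hx => hx.1.1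
  refine ⟨V, hVopen, hx0V, hVU, lam, ?_, ?_⟩
  · exact (euclTranspose k).contDiff.comp_contDiffOn
      (hKsm.comp_contDiffOn (hΦsm.mono hVU))
  · intro x hx
    have hxball : Φ x ∈ Metric.ball z0 (r / 2) := hx.2
    have hleft : Ψ (Φ x) = x := by
      have h1 : T'.symm (Φ x) = Θ x := rfl
      rw [hΨdef]
      show ph.symm (T'.symm (Φ x)) = x
      rw [h1, ← hphcoe]
      exact ph.left_inv hx.1.2
    have hχ1 : χ (Φ x) = 1 :=
      χ.one_of_mem_closedBall (Metric.ball_subset_closedBall hxball)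
    have hF1x : F1 x = h (Φ x) := by
      rw [hhdef]
      simp only [hχ1, one_mul, hleft]
    rw [hF1x, hKeq (Φ x)]
    have hsnd : (Φ x).2 = G1 x := rfl
    rw [hsnd, clm_eq_sum_coords]
    exact Finset.sum_congr rfl fun s _ => by simp only [hlamdef, euclTranspose_apply]

/-- Hadamard lemma for fiber bundles (Lemma 4.2 of the paper).
`π : M → B` is the smooth projection of a smooth fiber bundle with fiber `F`, `M` and `B`
smooth finite-dimensional real manifolds (Hausdorff, second countable).  If
`H : M → ℝ^K` and `g : B → ℝ^k` are smooth, `π(M_H) = B_g`, and the differential of `g`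
is surjective at every point of `B_g`, then for smooth `f : B → ℝ` the pullback `f ∘ π`
vanishes on `M_H` iff `f = Σ_s λ^s g^s` for some smooth `λ : B → ℝ^k`. -/
theorem hadamard_fiber_bundles
    {EM : Type} [NormedAddCommGroup EM] [NormedSpace ℝ EM] [FiniteDimensional ℝ EM]
    {HM : Type} [TopologicalSpace HM] (IM : ModelWithCorners ℝ EM HM) [IM.Boundaryless]
    {M : Type} [TopologicalSpace M] [ChartedSpace HM M] [IsManifold IM (⊤ : ℕ∞) M]
    [T2Space M] [SecondCountableTopology M]
    {EB : Type} [NormedAddCommGroup EB] [NormedSpace ℝ EB] [FiniteDimensional ℝ EB]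
    {HB : Type} [TopologicalSpace HB] (IB : ModelWithCorners ℝ EB HB) [IB.Boundaryless]
    {B : Type} [TopologicalSpace B] [ChartedSpace HB B] [IsManifold IB (⊤ : ℕ∞) B]
    [T2Space B] [SecondCountableTopology B]
    (F : Type) [TopologicalSpace F]
    (π : M → B) (hπ : ContMDiff IM IB (⊤ : ℕ∞) π)
    (hbundle : ∀ y : B, ∃ e : Bundle.Trivialization F π, y ∈ e.baseSet)
    (k K : ℕ)
    (H : M → EuclideanSpace ℝ (Fin K)) (hH : ContMDiff IM (𝓡 K) (⊤ : ℕ∞) H)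
    (g : B → EuclideanSpace ℝ (Fin k)) (hg : ContMDiff IB (𝓡 k) (⊤ : ℕ∞) g)
    (hproj : π '' {x : M | H x = 0} = {y : B | g y = 0})
    (hgrank : ∀ y : B, g y = 0 → Surjective (mfderiv IB (𝓡 k) g y))
    (f : B → ℝ) (hf : ContMDiff IB 𝓘(ℝ, ℝ) (⊤ : ℕ∞) f) :
    (∀ x : M, H x = 0 → f (π x) = 0) ↔
    ∃ lam : B → EuclideanSpace ℝ (Fin k),
      ContMDiff IB (𝓡 k) (⊤ : ℕ∞) lam ∧ ∀ y : B, f y = ∑ s : Fin k, lam y s * g y s := by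
  classical
  constructor
  · intro hvan0
    have hvanish : ∀ y : B, g y = 0 → f y = 0 := by
      intro y hy
      have hmem : y ∈ π '' {x : M | H x = 0} := by rw [hproj]; exact hy
      obtain ⟨x, hx, rfl⟩ := hmem
      exact hvan0 x hx
    haveI : LocallyCompactSpace B := Manifold.locallyCompact_of_finiteDimensional IB
    set t : B → Set (EuclideanSpace ℝ (Fin k)) :=
      fun y => {c | f y = ∑ s : Fin k, c s * g y s} with htdef
    have hconv : ∀ y, Convex ℝ (t y) := by
      intro y a ha b hb θ σ hθ hσ hsum
      have ha' : f y = ∑ s : Fin k, a s * g y s := ha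
      have hb' : f y = ∑ s : Fin k, b s * g y s := hb
      show f y = ∑ s : Fin k, (θ • a + σ • b) s * g y s
      have hcoord : ∀ s : Fin k, (θ • a + σ • b) s = θ * a s + σ * b s := fun s => rfl
      calc f y = θ * f y + σ * f y := by rw [← add_mul, hsum, one_mul]
        _ = θ * (∑ s : Fin k, a s * g y s) + σ * (∑ s : Fin k, b s * g y s) := by
            rw [← ha', ← hb']
        _ = ∑ s : Fin k, (θ • a + σ • b) s * g y s := by
            simp only [hcoord, Finset.mul_sum, add_mul, Finset.sum_add_distrib, mul_assoc]
    have hloc : ∀ y : B, ∃ U ∈ nhds y, ∃ lam : B → EuclideanSpace ℝ (Fin k),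
        ContMDiffOn IB (𝓡 k) (⊤ : ℕ∞) lam U ∧ ∀ y' ∈ U, lam y' ∈ t y' := by
      intro y
      by_cases hy : g y = 0
      · -- near a zero of g : use the local Hadamard lemma in a chart
        set φ := extChartAt IB y with hφdef
        have hys : y ∈ φ.source := mem_extChartAt_source y
        set G1 : EB → EuclideanSpace ℝ (Fin k) := g ∘ φ.symm with hG1def
        set F1 : EB → ℝ := f ∘ φ.symm with hF1def
        have htarget : IsOpen φ.target := isOpen_extChartAt_target y
        have hsymm : ContMDiffOn 𝓘(ℝ, EB) IB (⊤ : ℕ∞) φ.symm φ.target :=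
          contMDiffOn_extChartAt_symm y
        have hG1 : ContDiffOn ℝ ∞ G1 φ.target :=
          (hg.comp_contMDiffOn hsymm).contDiffOn
        have hF1 : ContDiffOn ℝ ∞ F1 φ.target :=
          (hf.comp_contMDiffOn hsymm).contDiffOn
        have hφyt : φ y ∈ φ.target := mem_extChartAt_target y
        have hG1x0 : G1 (φ y) = 0 := by
          rw [hG1def]
          show g (φ.symm (φ y)) = 0
          rw [φ.left_inv hys]; exact hy
        have hsurj : Surjective (fderiv ℝ G1 (φ y)) := by
          have heq : g =ᶠ[nhds y] (G1 ∘ φ) := by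
            filter_upwards [extChartAt_source_mem_nhds (I := IB) y] with y' hy'
            show g y' = g (φ.symm (φ y'))
            rw [φ.left_inv hy']
          have hG1at : ContDiffAt ℝ ∞ G1 (φ y) := hG1.contDiffAt (htarget.mem_nhds hφyt)
          have hG1' : MDifferentiableAt 𝓘(ℝ, EB) (𝓡 k) G1 (φ y) :=
            hG1at.contMDiffAt.mdifferentiableAt (by simp)
          have hφ' : MDifferentiableAt IB 𝓘(ℝ, EB) φ y :=
            (contMDiffAt_extChartAt (n := ⊤)).mdifferentiableAt (by simp)
          have hcomp := mfderiv_comp y hG1' hφ'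
          have hkey : mfderiv IB (𝓡 k) g y =
              (fderiv ℝ G1 (φ y)).comp (mfderiv IB 𝓘(ℝ, EB) φ y) := by
            rw [heq.mfderiv_eq, hcomp, mfderiv_eq_fderiv]; rfl
          have hsurj0 := hgrank y hy
          rw [hkey] at hsurj0
          have hsurj1 : Surjective
              (⇑(fderiv ℝ G1 (φ y)) ∘ ⇑(mfderiv IB 𝓘(ℝ, EB) φ y)) := hsurj0
          exact hsurj1.of_comp
        have hz1 : ∀ x ∈ φ.target, G1 x = 0 → F1 x = 0 := fun x _ h0 => hvanish _ h0
        obtain ⟨V, hVopen, hVmem, hVsub, lamE, hlamEsm, hlamEeq⟩ :=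
          local_hadamard htarget hφyt hG1 hF1 hG1x0 hsurj hz1
        refine ⟨φ.source ∩ φ ⁻¹' V, ?_, fun y' => lamE (φ y'), ?_, ?_⟩
        · have hopen : IsOpen (φ.source ∩ φ ⁻¹' V) :=
            (continuousOn_extChartAt y).isOpen_inter_preimage (isOpen_extChartAt_source y)
              hVopen
          exact hopen.mem_nhds ⟨hys, hVmem⟩
        · have h1 : ContMDiffOn IB 𝓘(ℝ, EB) (⊤ : ℕ∞) φ φ.source := by
            rw [hφdef, extChartAt_source]
            exact contMDiffOn_extChartAt
          have h2 : ContMDiffOn 𝓘(ℝ, EB) (𝓡 k) (⊤ : ℕ∞) lamE V := hlamEsm.contMDiffOn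
          exact h2.comp (h1.mono Set.inter_subset_left) (fun y' hy' => hy'.2)
        · intro y' hy'
          have hval := hlamEeq (φ y') hy'.2
          have hF1y : F1 (φ y') = f y' := by
            rw [hF1def]; show f (φ.symm (φ y')) = f y'; rw [φ.left_inv hy'.1]
          have hG1y : ∀ s, G1 (φ y') s = g y' s := by
            intro s
            rw [hG1def]
            show (g (φ.symm (φ y'))) s = g y' s
            rw [φ.left_inv hy'.1]
          show f y' = ∑ s : Fin k, lamE (φ y') s * g y' s
          rw [← hF1y, hval]
          exact Finset.sum_congr rfl fun s _ => by rw [hG1y]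
      · -- away from the zeros of g
        set Q : B → ℝ := fun y' => ∑ s : Fin k, g y' s * g y' s with hQdef
        have hQsm : ContMDiff IB 𝓘(ℝ, ℝ) (⊤ : ℕ∞) Q := by
          apply contMDiff_finset_sum
          intro s _
          have hgs : ContMDiff IB 𝓘(ℝ, ℝ) (⊤ : ℕ∞) (fun y' => g y' s) := by
            have h1 := (EuclideanSpace.proj (𝕜 := ℝ) s).contMDiff.comp hg
            have hfun : (fun y' : B => g y' s) = (⇑(EuclideanSpace.proj (𝕜 := ℝ) s) ∘ g) := by
              funext y'; simp
            rw [hfun]; exact h1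
          exact hgs.mul hgs
        set U : Set B := {y' | g y' ≠ 0} with hUdef
        have hUopen : IsOpen U := by
          have : U = g ⁻¹' {(0 : EuclideanSpace ℝ (Fin k))}ᶜ := rfl
          rw [this]
          exact (isOpen_compl_singleton).preimage hg.continuous
        have hyU : y ∈ U := hy
        have hQne : ∀ y' ∈ U, Q y' ≠ 0 := by
          intro y' hy'
          have : 0 < Q y' := by
            have hne : g y' ≠ 0 := hy'
            have hex : ∃ s, g y' s ≠ 0 := by
              by_contra hno
              push_neg at hno
              exact hne (by ext s; exact hno s)
            obtain ⟨s, hs⟩ := hex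
            apply Finset.sum_pos' (fun i _ => mul_self_nonneg _)
            exact ⟨s, Finset.mem_univ s, mul_self_pos.2 hs⟩
          exact ne_of_gt this
        refine ⟨U, hUopen.mem_nhds hyU, fun y' => (f y' / Q y') • g y', ?_, ?_⟩
        · refine ContMDiffOn.smul (I := 𝓘(ℝ, ℝ)) (f := fun y' => f y' / Q y') (g := g) ?_ ?_
          · exact (hf.contMDiffOn.div₀ (hQsm.contMDiffOn) hQne)
          · exact hg.contMDiffOn
        · intro y' hy'
          show f y' = ∑ s : Fin k, ((f y' / Q y') • g y') s * g y' s
          have hcoord : ∀ s : Fin k, ((f y' / Q y') • g y') s = (f y' / Q y') * g y' s :=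
            fun s => rfl
          calc f y' = (f y' / Q y') * Q y' := by
                rw [div_mul_cancel₀ _ (hQne y' hy')]
            _ = ∑ s : Fin k, ((f y' / Q y') • g y') s * g y' s := by
                rw [hQdef]
                simp only [hcoord, Finset.mul_sum, mul_assoc, PiLp.smul_apply, smul_eq_mul]
    obtain ⟨lam, hlam⟩ := exists_contMDiffMap_forall_mem_convex_of_local IB hconv hloc
    exact ⟨lam, lam.contMDiff, fun y => hlam y⟩
  · rintro ⟨lam, _, hlam⟩ x hx
    have hgπ : g (π x) = 0 := by
      have hmem : π x ∈ π '' {x : M | H x = 0} := ⟨x, hx, rfl⟩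
      rw [hproj] at hmem
      exact hmem
    rw [hlam (π x), hgπ]
    simp
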